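/- Let Y : ℂ × ℝ → ℂ be continuously differentiable (ContDiff ℝ 1, viewing ℂ as ℝ²) and suppose that Re( conj(z) · Y(z, t) ) ≤ 0 for every t ∈ ℝ and every z ∈ ℂ with |z| = 1. Let a ≤ b be real numbers and let g : [a, b] → ℂ be differentiable with g′(s) = Y(g(s), s) for all s ∈ [a, b], and suppose |g(a)| ≤ 1. Then |g(s)| ≤ 1 for all s ∈ [a, b]. (Forward invariance of the closed unit disc under a time-dependent vector field that is inward-pointing, possibly tangentially, on the unit circle.) -/

import Mathlib

open Set Complex

theorem closed_unit_disc_forward_invariant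
    (Y : ℂ × ℝ → ℂ)
    (hY : ContDiff ℝ 1 Y)
    (hY_in : ∀ t : ℝ, ∀ z : ℂ, ‖z‖ = 1 → ((starRingEnd ℂ) z * Y (z, t)).re ≤ 0)
    (a b : ℝ) (hab : a ≤ b)
    (g : ℝ → ℂ)
    (hg : ∀ s ∈ Icc a b, HasDerivWithinAt g (Y (g s, s)) (Icc a b) s)
    (hga : ‖g a‖ ≤ 1) :
    ∀ s ∈ Icc a b, ‖g s‖ ≤ 1 := by
  -- the "radial component" of the vector field
  set h : ℂ × ℝ → ℝ := fun p => ((starRingEnd ℂ) p.1 * Y p).re with hh_def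
  have hconj : ContDiff ℝ 1 (fun p : ℂ × ℝ => (starRingEnd ℂ) p.1) := by
    have : ContDiff ℝ 1 (fun z : ℂ => (starRingEnd ℂ) z) := Complex.conjCLE.contDiff
    exact this.comp contDiff_fst
  have hh_cd : ContDiff ℝ 1 h :=
    (Complex.reCLM.contDiff.comp (hconj.mul hY) : _)
  -- continuity of g
  have hgc : ContinuousOn g (Icc a b) := fun s hs => (hg s hs).continuousWithinAt
  -- a bound for g on [a, b]
  obtain ⟨C0, hC0⟩ := isCompact_Icc.exists_bound_of_continuousOn hgc
  set R : ℝ := max C0 1 with hR_def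
  have hR1 : (1 : ℝ) ≤ R := le_max_right _ _
  have hgR : ∀ s ∈ Icc a b, ‖g s‖ ≤ R := fun s hs => (hC0 s hs).trans (le_max_left _ _)
  -- a compact convex set
  set S : Set (ℂ × ℝ) := Metric.closedBall 0 R ×ˢ Icc a b with hS_def
  have hScvx : Convex ℝ S := (convex_closedBall _ _).prod (convex_Icc _ _)
  have hScpt : IsCompact S := (isCompact_closedBall _ _).prod isCompact_Icc
  -- Lipschitz-type bound for h on S
  have hfd_cont : Continuous fun p : ℂ × ℝ => ‖fderiv ℝ h p‖ :=
    (hh_cd.continuous_fderiv one_ne_zero).norm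
  obtain ⟨C1, hC1⟩ := hScpt.exists_bound_of_continuousOn hfd_cont.continuousOn
  set K : ℝ := max C1 0 with hK_def
  have hK0 : (0 : ℝ) ≤ K := le_max_right _ _
  have hlip : ∀ p ∈ S, ∀ q ∈ S, ‖h p - h q‖ ≤ K * ‖p - q‖ := by
    intro p hp q hq
    refine hScvx.norm_image_sub_le_of_norm_fderiv_le
      (fun x _ => (hh_cd.differentiable one_ne_zero).differentiableAt) ?_ hq hp
    intro x hx
    exact le_trans (le_trans (le_abs_self _) (hC1 x hx)) (le_max_left _ _)
  -- key inequality: outside the disc (but within radius R), h(z,t) ≤ K (|z|² - 1)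
  have key : ∀ x ∈ Icc a b, 1 ≤ ‖g x‖ →
      ((starRingEnd ℂ) (g x) * Y (g x, x)).re ≤ K * (Complex.normSq (g x) - 1) := by
    intro x hx h1
    set z : ℂ := g x with hz_def
    set r : ℝ := ‖z‖ with hr_def
    have hr0 : (0 : ℝ) < r := lt_of_lt_of_le one_pos h1
    set w : ℂ := r⁻¹ • z with hw_def
    have hwabs : ‖w‖ = 1 := by
      rw [hw_def]
      rw [norm_smul, norm_inv, Real.norm_eq_abs, abs_of_pos hr0]
      rw [← hr_def, inv_mul_cancel₀ (ne_of_gt hr0)]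
    have hzS : (z, x) ∈ S := by
      constructor
      · simp only [Metric.mem_closedBall, dist_zero_right]
        exact hgR x hx
      · exact hx
    have hwS : (w, x) ∈ S := by
      constructor
      · simp only [Metric.mem_closedBall, dist_zero_right]
        rw [hwabs]
        exact hR1
      · exact hx
    have hd := hlip (z, x) hzS (w, x) hwS
    have hnorm : ‖((z, x) : ℂ × ℝ) - (w, x)‖ = r - 1 := by
      have e : ((z, x) : ℂ × ℝ) - (w, x) = (z - w, 0) := by
        simp [Prod.ext_iff]
      rw [e, Prod.norm_def]
      simp only [norm_zero]
      rw [max_eq_left (norm_nonneg _)]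
      have e2 : z - w = (1 - r⁻¹) • z := by
        rw [hw_def, sub_smul, one_smul]
      rw [e2, norm_smul, Real.norm_eq_abs]
      rw [_root_.abs_of_nonneg (by
        have : r⁻¹ ≤ 1 := inv_le_one_of_one_le₀ h1
        linarith)]
      rw [show ‖z‖ = r from rfl]
      field_simp
    have hwin : h (w, x) ≤ 0 := hY_in x w hwabs
    have hzw : h (z, x) - h (w, x) ≤ K * (r - 1) := by
      calc h (z, x) - h (w, x) ≤ ‖h (z, x) - h (w, x)‖ := le_abs_self _
        _ ≤ K * ‖((z, x) : ℂ × ℝ) - (w, x)‖ := hd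
        _ = K * (r - 1) := by rw [hnorm]
    have hzle : h (z, x) ≤ K * (r - 1) := by linarith
    have hsq : r ^ 2 = Complex.normSq z := Complex.sq_norm z
    have : K * (r - 1) ≤ K * (Complex.normSq z - 1) := by
      apply mul_le_mul_of_nonneg_left _ hK0
      nlinarith
    calc ((starRingEnd ℂ) (g x) * Y (g x, x)).re = h (z, x) := rfl
      _ ≤ K * (r - 1) := hzle
      _ ≤ K * (Complex.normSq z - 1) := this
  -- derivative of |g|²
  have hφd : ∀ s ∈ Icc a b, HasDerivWithinAt (fun u => Complex.normSq (g u))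
      (2 * ((starRingEnd ℂ) (g s) * Y (g s, s)).re) (Icc a b) s := by
    intro s hs
    have hre : HasDerivWithinAt (fun u => (g u).re) ((Y (g s, s)).re) (Icc a b) s := by
      exact Complex.reCLM.hasFDerivAt.comp_hasDerivWithinAt s (hg s hs)
    have him : HasDerivWithinAt (fun u => (g u).im) ((Y (g s, s)).im) (Icc a b) s := by
      exact Complex.imCLM.hasFDerivAt.comp_hasDerivWithinAt s (hg s hs)
    have H := (hre.mul hre).add (him.mul him)
    have e1 : (fun u => Complex.normSq (g u))
        = fun u => (g u).re * (g u).re + (g u).im * (g u).im := by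
      funext u; rw [Complex.normSq_apply]
    have e2 : 2 * ((starRingEnd ℂ) (g s) * Y (g s, s)).re
        = ((Y (g s, s)).re * (g s).re + (g s).re * (Y (g s, s)).re)
          + ((Y (g s, s)).im * (g s).im + (g s).im * (Y (g s, s)).im) := by
      simp [Complex.mul_re]
      ring
    rw [e1, e2]
    exact H
  have hφc : ContinuousOn (fun u => Complex.normSq (g u)) (Icc a b) :=
    Complex.continuous_normSq.comp_continuousOn hgc
  -- Grönwall setup
  set φ : ℝ → ℝ := fun u => Complex.normSq (g u) with hφ_def
  set f : ℝ → ℝ := fun u => max (φ u - 1) 0 with hf_def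
  set f' : ℝ → ℝ := fun u =>
    if 1 < φ u then 2 * ((starRingEnd ℂ) (g u) * Y (g u, u)).re else 0 with hf'_def
  have hfc : ContinuousOn f (Icc a b) :=
    (hφc.sub continuousOn_const).sup continuousOn_const
  -- the liminf slope condition
  have hslope_cond : ∀ x ∈ Ico a b, ∀ r, f' x < r →
      ∃ᶠ z in nhdsWithin x (Ioi x), (z - x)⁻¹ * (f z - f x) < r := by
    intro x hx r hr
    have hxI : x ∈ Icc a b := ⟨hx.1, le_of_lt hx.2⟩
    have hxb : x < b := hx.2
    have hIoo_sub : Ioo x b ⊆ Icc a b \ {x} := by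
      intro z hz
      exact ⟨⟨le_trans hx.1 (le_of_lt hz.1), le_of_lt hz.2⟩, ne_of_gt hz.1⟩
    have hIoo_sub' : Ioo x b ⊆ Icc a b := fun z hz => (hIoo_sub hz).1
    have hnhds : nhdsWithin x (Ioi x) = nhdsWithin x (Ioo x b) :=
      (nhdsWithin_Ioo_eq_nhdsGT hxb).symm
    have hle1 : nhdsWithin x (Ioi x) ≤ nhdsWithin x (Icc a b \ {x}) := by
      rw [hnhds]; exact nhdsWithin_mono x hIoo_sub
    have hle2 : nhdsWithin x (Ioi x) ≤ nhdsWithin x (Icc a b) := by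
      rw [hnhds]; exact nhdsWithin_mono x hIoo_sub'
    have hmem : ∀ᶠ z in nhdsWithin x (Ioi x), z ∈ Ioi x :=
      self_mem_nhdsWithin
    have hslope : Filter.Tendsto (slope φ x) (nhdsWithin x (Ioi x))
        (nhds (2 * ((starRingEnd ℂ) (g x) * Y (g x, x)).re)) :=
      ((hasDerivWithinAt_iff_tendsto_slope.mp (hφd x hxI)).mono_left hle1)
    have hφtend : Filter.Tendsto φ (nhdsWithin x (Ioi x)) (nhds (φ x)) :=
      ((hφc x hxI).mono_left hle2)
    -- pointwise slope comparison
    have hptwise : ∀ z ∈ Ioi x, (z - x)⁻¹ * (f z - f x) ≤ max (slope φ x z) 0 := by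
      intro z hz
      have hzx : (0 : ℝ) < z - x := sub_pos.mpr hz
      have h1 : f z - f x ≤ max (φ z - φ x) 0 := by
        have hmm := max_sub_max_le_max (φ z - 1) 0 (φ x - 1) 0
        have e : φ z - 1 - (φ x - 1) = φ z - φ x := by ring
        rw [sub_zero, e] at hmm
        exact hmm
      calc (z - x)⁻¹ * (f z - f x) ≤ (z - x)⁻¹ * max (φ z - φ x) 0 :=
            mul_le_mul_of_nonneg_left h1 (le_of_lt (inv_pos.mpr hzx))
        _ = max ((z - x)⁻¹ * (φ z - φ x)) ((z - x)⁻¹ * 0) :=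
            mul_max_of_nonneg _ _ (le_of_lt (inv_pos.mpr hzx))
        _ = max (slope φ x z) 0 := by
            rw [mul_zero, slope_def_field, div_eq_inv_mul]
    rcases lt_trichotomy (φ x) 1 with hφx | hφx | hφx
    · -- φ x < 1 : f is locally 0
      have hr0 : (0 : ℝ) < r := by
        have : f' x = 0 := if_neg (by linarith)
        linarith [hr, this.symm.le]
      have hev : ∀ᶠ z in nhdsWithin x (Ioi x), φ z < 1 :=
        hφtend.eventually_lt_const hφx
      refine (hev.mono ?_).frequently
      intro z hz
      have hfz : f z = 0 := max_eq_right (by linarith)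
      have hfx : f x = 0 := max_eq_right (by linarith)
      rw [hfz, hfx]
      simpa using hr0
    · -- φ x = 1 : use the sign condition on the circle
      have hfx0 : f' x = 0 := if_neg (by simp [hφx])
      have hr0 : (0 : ℝ) < r := by rw [hfx0] at hr; exact hr
      have habs1 : ‖g x‖ = 1 := by
        have : ‖g x‖ = Real.sqrt (φ x) := by
          rw [Complex.norm_def]
        rw [this, hφx, Real.sqrt_one]
      have hd0 : 2 * ((starRingEnd ℂ) (g x) * Y (g x, x)).re ≤ 0 := by
        have := hY_in x (g x) habs1
        linarith
      have hmaxtend : Filter.Tendsto (fun z => max (slope φ x z) 0)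
          (nhdsWithin x (Ioi x)) (nhds (max (2 * ((starRingEnd ℂ) (g x) * Y (g x, x)).re) 0)) :=
        hslope.max tendsto_const_nhds
      have hlim0 : max (2 * ((starRingEnd ℂ) (g x) * Y (g x, x)).re) 0 < r := by
        rw [max_eq_right hd0]; exact hr0
      have hev : ∀ᶠ z in nhdsWithin x (Ioi x), max (slope φ x z) 0 < r :=
        hmaxtend.eventually_lt_const hlim0
      refine ((hev.and hmem).mono ?_).frequently
      intro z ⟨hz1, hz2⟩
      exact lt_of_le_of_lt (hptwise z hz2) hz1
    · -- φ x > 1 : f = φ - 1 locally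
      have hfx' : f' x = 2 * ((starRingEnd ℂ) (g x) * Y (g x, x)).re := if_pos hφx
      rw [hfx'] at hr
      have hev1 : ∀ᶠ z in nhdsWithin x (Ioi x), 1 < φ z :=
        hφtend.eventually_const_lt hφx
      have hev2 : ∀ᶠ z in nhdsWithin x (Ioi x), slope φ x z < r :=
        hslope.eventually_lt_const hr
      refine ((hev1.and (hev2.and hmem)).mono ?_).frequently
      intro z ⟨hz1, hz2, hz3⟩
      have hfz : f z = φ z - 1 := max_eq_left (by linarith)
      have hfx : f x = φ x - 1 := max_eq_left (by linarith)
      rw [hfz, hfx]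
      have : (z - x)⁻¹ * (φ z - 1 - (φ x - 1)) = slope φ x z := by
        rw [slope_def_field, div_eq_inv_mul]; ring_nf
      rw [this]
      exact hz2
  -- the bound condition
  have hbound : ∀ x ∈ Ico a b, f' x ≤ (2 * K) * f x + 0 := by
    intro x hx
    have hxI : x ∈ Icc a b := ⟨hx.1, le_of_lt hx.2⟩
    rw [add_zero]
    by_cases h1 : 1 < φ x
    · have hfx' : f' x = 2 * ((starRingEnd ℂ) (g x) * Y (g x, x)).re := if_pos h1
      have habs : 1 ≤ ‖g x‖ := by
        nlinarith [Complex.sq_norm (g x), norm_nonneg (g x), le_of_lt h1]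
      have hk := key x hxI habs
      have hfx : f x = φ x - 1 := max_eq_left (by linarith)
      rw [hfx', hfx]
      calc 2 * ((starRingEnd ℂ) (g x) * Y (g x, x)).re
          ≤ 2 * (K * (Complex.normSq (g x) - 1)) := by linarith
        _ = 2 * K * (φ x - 1) := by ring
    · have hfx' : f' x = 0 := if_neg h1
      rw [hfx']
      have : 0 ≤ f x := le_max_right _ _
      positivity
  -- apply Grönwall
  have hfa : f a ≤ 0 := by
    have : φ a ≤ 1 := by
      nlinarith [Complex.sq_norm (g a), norm_nonneg (g a)]
    exact max_le (by linarith) le_rfl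
  have hmain := le_gronwallBound_of_liminf_deriv_right_le hfc hslope_cond hfa hbound
  intro s hs
  have := hmain s hs
  rw [gronwallBound_ε0_δ0] at this
  have hφs : φ s ≤ 1 := by
    have h0 : f s ≤ 0 := this
    have h1 : φ s - 1 ≤ f s := le_max_left _ _
    linarith
  nlinarith [Complex.sq_norm (g s), norm_nonneg (g s)]
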